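/- For any finite graded poset P, rowvacuation is an involution on P-partitions of height m, and Rvac ∘ Row = Row⁻¹ ∘ Rvac, and Row^{r(P)+2} = Rvac* ∘ Rvac. -/

import Mathlib

open scoped Classical

/-- A `P`-partition of height `m`: a weakly order-preserving map `P → {0, ..., m}`. -/
def IsPPart {P : Type*} [PartialOrder P] (m : ℕ) (f : P → ℕ) : Prop :=
  (∀ p, f p ≤ m) ∧ Monotone f

/-- The new value of the piecewise-linear toggle at `p`:
`min{π(r) : p ⋖ r} + max{π(r) : r ⋖ p} − π(p)`, with `min ∅ = m` and `max ∅ = 0`. -/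
noncomputable def togVal {P : Type*} [PartialOrder P] [Fintype P]
    (m : ℕ) (f : P → ℕ) (p : P) : ℕ :=
  (insert m ((Finset.univ.filter fun r => p ⋖ r).image f)).min'
      (Finset.insert_nonempty _ _) +
    (insert 0 ((Finset.univ.filter fun r => r ⋖ p).image f)).max'
      (Finset.insert_nonempty _ _) -
    f p

/-- The piecewise-linear toggle `τ_p` on `P`-partitions of height `m`. -/
noncomputable def tog {P : Type*} [PartialOrder P] [Fintype P]
    (m : ℕ) (p : P) (f : P → ℕ) : P → ℕ :=
  fun q => if q = p then togVal m f p else f q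

/-- The rank toggle `τ_i`: simultaneously (equivalently, in any order) toggle all elements
of rank `i`. -/
noncomputable def rankTog {P : Type*} [PartialOrder P] [Fintype P]
    (rk : P → ℕ) (m i : ℕ) (f : P → ℕ) : P → ℕ :=
  fun q => if rk q = i then togVal m f q else f q

/-- `rowFrom rk m r j = τ_{r-j} ∘ τ_{r-j+1} ∘ ⋯ ∘ τ_r` (rank toggles, top rank first). -/
noncomputable def rowFrom {P : Type*} [PartialOrder P] [Fintype P]
    (rk : P → ℕ) (m r : ℕ) : ℕ → (P → ℕ) → (P → ℕ)
  | 0, f => rankTog rk m r f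
  | j + 1, f => rankTog rk m (r - (j + 1)) (rowFrom rk m r j f)

/-- Rowmotion `Row = τ_0 ∘ τ_1 ∘ ⋯ ∘ τ_r` on `P`-partitions of height `m`, for a graded
poset with rank function `rk` and top rank `r`. -/
noncomputable def rowm {P : Type*} [PartialOrder P] [Fintype P]
    (rk : P → ℕ) (m r : ℕ) (f : P → ℕ) : P → ℕ :=
  rowFrom rk m r r f

noncomputable def rvacAux {P : Type*} [PartialOrder P] [Fintype P]
    (rk : P → ℕ) (m r : ℕ) : ℕ → (P → ℕ) → (P → ℕ)
  | 0, f => rowFrom rk m r 0 f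
  | j + 1, f => rvacAux rk m r j (rowFrom rk m r (j + 1) f)

/-- Rowvacuation `Rvac = (τ_r) ∘ (τ_{r-1} ∘ τ_r) ∘ ⋯ ∘ (τ_0 ∘ ⋯ ∘ τ_{r-1} ∘ τ_r)`. -/
noncomputable def rvac {P : Type*} [PartialOrder P] [Fintype P]
    (rk : P → ℕ) (m r : ℕ) (f : P → ℕ) : P → ℕ :=
  rvacAux rk m r r f

/-- Dual rowvacuation `Rvac*(π) = (Rvac(π*))*`, where `π*(p) = m − π(p)` is a
`P*`-partition of the dual poset (whose rank function is `p ↦ r − rk p`). -/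
noncomputable def rvacStar {P : Type*} [PartialOrder P] [Fintype P]
    (rk : P → ℕ) (m r : ℕ) (f : P → ℕ) : P → ℕ :=
  fun p => m -
    rvac (P := Pᵒᵈ) (fun q => r - rk (OrderDual.ofDual q)) m r
      (fun q => m - f (OrderDual.ofDual q)) (OrderDual.toDual p)

section Abstract

variable {G : Type*} [Group G] (t : ℕ → G)

/-- `Wprod t n a = t a * t (a+1) * ⋯ * t (a+n-1)`. -/
def Wprod : ℕ → ℕ → G
  | 0, _ => 1
  | n+1, a => t a * Wprod n (a+1)

/-- Evacuation for the interval of indices `[a, a+n-1]`. -/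
def EvacP : ℕ → ℕ → G
  | 0, _ => 1
  | n+1, a => EvacP n (a+1) * Wprod t (n+1) a

/-- Dual evacuation for the interval of indices `[a, a+n-1]`. -/
def EstarP : ℕ → ℕ → G
  | 0, _ => 1
  | n+1, a => EstarP n a * (Wprod t (n+1) a)⁻¹

/-- Partial product `D (a+k) b * ⋯ * D (a+1) b` where `b = a + n`. -/
def GdP : ℕ → ℕ → ℕ → G
  | 0, _, _ => 1
  | k+1, a, n => Wprod t (n - k) (a+k+1) * GdP k a n

theorem t_inv (hinv : ∀ i, t i * t i = 1) (i : ℕ) : (t i)⁻¹ = t i := by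
  rw [inv_eq_iff_mul_eq_one, hinv]

theorem Wprod_succ_right (n a : ℕ) :
    Wprod t (n+1) a = Wprod t n a * t (a+n) := by
  induction n generalizing a with
  | zero => simp [Wprod]
  | succ n ih =>
      rw [show a + (n+1) = (a+1) + n by omega]
      show t a * Wprod t (n+1) (a+1) = (t a * Wprod t n (a+1)) * t (a+1+n)
      rw [ih (a+1), mul_assoc]

variable (hinv : ∀ i, t i * t i = 1)
    (hcomm : ∀ i j, i + 2 ≤ j → t i * t j = t j * t i)

include hinv hcomm
set_option linter.unusedSectionVars false

theorem commute_t_W (i : ℕ) (n : ℕ) : ∀ a, i + 2 ≤ a →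
    Commute (t i) (Wprod t n a) := by
  induction n with
  | zero => exact fun a _ => Commute.one_right _
  | succ n ih =>
      intro a h
      rw [Wprod]
      have hc : Commute (t i) (t a) := hcomm i a h
      exact hc.mul_right (ih (a+1) (by omega))

theorem commute_W_t (j : ℕ) (n : ℕ) : ∀ a, a + n + 1 ≤ j →
    Commute (Wprod t n a) (t j) := by
  induction n with
  | zero => exact fun a _ => Commute.one_left _
  | succ n ih =>
      intro a h
      rw [Wprod]
      have hc : Commute (t a) (t j) := hcomm a j (by omega)
      exact hc.mul_left (ih (a+1) (by omega))

theorem commute_W_W (n k c : ℕ) : ∀ a, a + n + 1 ≤ c →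
    Commute (Wprod t n a) (Wprod t k c) := by
  induction n with
  | zero => exact fun a _ => Commute.one_left _
  | succ n ih =>
      intro a h
      rw [Wprod]
      exact (commute_t_W t hinv hcomm a k c (by omega)).mul_left (ih (a+1) (by omega))

theorem commute_t_Evac (i : ℕ) (n : ℕ) : ∀ a, i + 2 ≤ a →
    Commute (t i) (EvacP t n a) := by
  induction n with
  | zero => exact fun a _ => Commute.one_right _
  | succ n ih =>
      intro a h
      rw [EvacP]
      exact (ih (a+1) (by omega)).mul_right (commute_t_W t hinv hcomm i (n+1) a h)

theorem L1 (n : ℕ) : ∀ a,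
    Wprod t (n+1) a * EvacP t n (a+1) = EvacP t n (a+1) * (Wprod t (n+1) a)⁻¹ := by
  induction n with
  | zero =>
      intro a; simp [Wprod, EvacP, t_inv t hinv]
  | succ n ih =>
      intro a
      have hW : Wprod t (n+2) a = t a * Wprod t (n+1) (a+1) := rfl
      have hE : EvacP t (n+1) (a+1) = EvacP t n (a+2) * Wprod t (n+1) (a+1) := rfl
      have hcomE : Commute (t a) (EvacP t n (a+2)) :=
        commute_t_Evac t hinv hcomm a n (a+2) (by omega)
      calc Wprod t (n+2) a * EvacP t (n+1) (a+1)
          = t a * (Wprod t (n+1) (a+1) * EvacP t n (a+2)) * Wprod t (n+1) (a+1) := by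
            rw [hW, hE]; group
        _ = t a * (EvacP t n (a+2) * (Wprod t (n+1) (a+1))⁻¹) * Wprod t (n+1) (a+1) := by
            rw [ih (a+1)]
        _ = t a * EvacP t n (a+2) := by group
        _ = EvacP t n (a+2) * t a := hcomE.eq
        _ = EvacP t (n+1) (a+1) * (Wprod t (n+2) a)⁻¹ := by
            rw [hE, hW, mul_inv_rev, t_inv t hinv]; group

theorem L1key (n a : ℕ) :
    Wprod t (n+1) a * EvacP t n (a+1) * Wprod t (n+1) a = EvacP t n (a+1) := by
  rw [L1 t hinv hcomm n a]; group

theorem L1' (n a : ℕ) :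
    (Wprod t (n+1) a)⁻¹ * EvacP t n (a+1) = EvacP t n (a+1) * Wprod t (n+1) a := by
  calc (Wprod t (n+1) a)⁻¹ * EvacP t n (a+1)
      = (Wprod t (n+1) a)⁻¹ * (Wprod t (n+1) a * EvacP t n (a+1) * Wprod t (n+1) a) := by
        rw [L1key t hinv hcomm n a]
    _ = EvacP t n (a+1) * Wprod t (n+1) a := by group

theorem L3 (n : ℕ) : ∀ a, EvacP t n a * EvacP t n a = 1 := by
  induction n with
  | zero => intro a; simp [EvacP]
  | succ n ih =>
      intro a
      have hE : EvacP t (n+1) a = EvacP t n (a+1) * Wprod t (n+1) a := rfl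
      calc EvacP t (n+1) a * EvacP t (n+1) a
          = EvacP t n (a+1) * (Wprod t (n+1) a * EvacP t n (a+1)) * Wprod t (n+1) a := by
            rw [hE]; group
        _ = EvacP t n (a+1) * (EvacP t n (a+1) * (Wprod t (n+1) a)⁻¹) * Wprod t (n+1) a := by
            rw [L1 t hinv hcomm n a]
        _ = EvacP t n (a+1) * EvacP t n (a+1) := by group
        _ = 1 := ih (a+1)

theorem L2 (n a : ℕ) :
    Wprod t (n+1) a * EvacP t (n+1) a * Wprod t (n+1) a = EvacP t (n+1) a := by
  have hE : EvacP t (n+1) a = EvacP t n (a+1) * Wprod t (n+1) a := rfl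
  calc Wprod t (n+1) a * EvacP t (n+1) a * Wprod t (n+1) a
      = (Wprod t (n+1) a * EvacP t n (a+1) * Wprod t (n+1) a) * Wprod t (n+1) a := by
        rw [hE]; group
    _ = EvacP t n (a+1) * Wprod t (n+1) a := by rw [L1key t hinv hcomm n a]
    _ = EvacP t (n+1) a := hE.symm

theorem commute_t_Estar (j : ℕ) (n : ℕ) : ∀ a, a + n + 1 ≤ j →
    Commute (t j) (EstarP t n a) := by
  induction n with
  | zero => exact fun a _ => Commute.one_right _
  | succ n ih =>
      intro a h
      rw [EstarP]
      exact (ih a (by omega)).mul_right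
        ((commute_W_t t hinv hcomm j (n+1) a (by omega)).symm.inv_right)

theorem L1star (n a : ℕ) :
    (Wprod t (n+1) a)⁻¹ * EstarP t n a = EstarP t n a * Wprod t (n+1) a := by
  induction n with
  | zero => simp [Wprod, EstarP, t_inv t hinv]
  | succ n ih =>
      have hW : Wprod t (n+2) a = Wprod t (n+1) a * t (a+(n+1)) :=
        Wprod_succ_right t (n+1) a
      have hE : EstarP t (n+1) a = EstarP t n a * (Wprod t (n+1) a)⁻¹ := rfl
      have hcomE : Commute (t (a+(n+1))) (EstarP t n a) :=
        commute_t_Estar t hinv hcomm (a+(n+1)) n a (by omega)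
      calc (Wprod t (n+2) a)⁻¹ * EstarP t (n+1) a
          = t (a+(n+1)) * ((Wprod t (n+1) a)⁻¹ * EstarP t n a) * (Wprod t (n+1) a)⁻¹ := by
            rw [hW, hE, mul_inv_rev, t_inv t hinv]; group
        _ = t (a+(n+1)) * (EstarP t n a * Wprod t (n+1) a) * (Wprod t (n+1) a)⁻¹ := by
            rw [ih]
        _ = t (a+(n+1)) * EstarP t n a := by group
        _ = EstarP t n a * t (a+(n+1)) := hcomE.eq
        _ = EstarP t (n+1) a * Wprod t (n+2) a := by
            rw [hE, hW]; group

theorem L3star (n a : ℕ) : EstarP t n a * EstarP t n a = 1 := by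
  induction n with
  | zero => simp [EstarP]
  | succ n ih =>
      have hE : EstarP t (n+1) a = EstarP t n a * (Wprod t (n+1) a)⁻¹ := rfl
      calc EstarP t (n+1) a * EstarP t (n+1) a
          = EstarP t n a * ((Wprod t (n+1) a)⁻¹ * EstarP t n a) * (Wprod t (n+1) a)⁻¹ := by
            rw [hE]; group
        _ = EstarP t n a * (EstarP t n a * Wprod t (n+1) a) * (Wprod t (n+1) a)⁻¹ := by
            rw [L1star t hinv hcomm n a]
        _ = EstarP t n a * EstarP t n a := by group
        _ = 1 := ih

theorem Qlem (a n : ℕ) : ∀ k, k + 1 ≤ n →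
    GdP t k a n * Wprod t (n+1) a =
      (Wprod t (k+1) a)⁻¹ * (Wprod t (n-k) (a+k+1) * GdP t k a n) := by
  intro k
  induction k with
  | zero =>
      intro hk
      have h1 : Wprod t (n+1) a = t a * Wprod t n (a+1) := rfl
      simp only [GdP, mul_one, one_mul, Nat.sub_zero, Nat.add_zero]
      rw [h1, show (Wprod t 1 a) = t a * 1 from rfl, mul_one, t_inv t hinv]
  | succ k ih =>
      intro hk
      have hkn : k + 1 ≤ n := by omega
      have hG : GdP t (k+1) a n = Wprod t (n-k) (a+k+1) * GdP t k a n := rfl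
      have hWinv : (Wprod t (k+2) a)⁻¹ = t (a+(k+1)) * (Wprod t (k+1) a)⁻¹ := by
        rw [Wprod_succ_right t (k+1) a, mul_inv_rev, t_inv t hinv]
      have hWsplit : Wprod t (n-k) (a+k+1) = t (a+k+1) * Wprod t (n-k-1) (a+k+2) := by
        rw [show n - k = (n - k - 1) + 1 by omega]; rfl
      have hcom : Commute ((Wprod t (k+1) a)⁻¹) (Wprod t (n-k-1) (a+k+2)) :=
        (commute_W_W t hinv hcomm (k+1) (n-k-1) (a+k+2) a (by omega)).inv_left
      calc GdP t (k+1) a n * Wprod t (n+1) a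
          = Wprod t (n-k) (a+k+1) * (GdP t k a n * Wprod t (n+1) a) := by
            rw [hG]; group
        _ = Wprod t (n-k) (a+k+1) * ((Wprod t (k+1) a)⁻¹ *
              (Wprod t (n-k) (a+k+1) * GdP t k a n)) := by rw [ih hkn]
        _ = t (a+k+1) * (Wprod t (n-k-1) (a+k+2) * (Wprod t (k+1) a)⁻¹) *
              (Wprod t (n-k) (a+k+1) * GdP t k a n) := by
            rw [hWsplit]; group
        _ = t (a+k+1) * ((Wprod t (k+1) a)⁻¹ * Wprod t (n-k-1) (a+k+2)) *
              (Wprod t (n-k) (a+k+1) * GdP t k a n) := by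
            rw [hcom.symm.eq]
        _ = (t (a+(k+1)) * (Wprod t (k+1) a)⁻¹) *
              (Wprod t (n-(k+1)) (a+(k+1)+1) * (Wprod t (n-k) (a+k+1) * GdP t k a n)) := by
            rw [show n - (k+1) = n - k - 1 by omega, show a + (k+1) + 1 = a + k + 2 by omega,
              show a + (k+1) = a + k + 1 by omega]; group
        _ = (Wprod t (k+2) a)⁻¹ * (Wprod t (n-(k+1)) (a+(k+1)+1) * GdP t (k+1) a n) := by
            rw [hWinv, hG]

theorem Plem (a n : ℕ) : ∀ j, j ≤ n →
    (Wprod t (n+1) a) ^ j = EstarP t j a * GdP t j a n := by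
  intro j
  induction j with
  | zero => intro _; simp [EstarP, GdP]
  | succ j ih =>
      intro hj
      have hjn : j ≤ n := by omega
      calc (Wprod t (n+1) a) ^ (j+1)
          = (EstarP t j a * GdP t j a n) * Wprod t (n+1) a := by
            rw [pow_succ, ih hjn]
        _ = EstarP t j a * ((Wprod t (j+1) a)⁻¹ * (Wprod t (n-j) (a+j+1) * GdP t j a n)) := by
            rw [mul_assoc, Qlem t hinv hcomm a n j hj]
        _ = (EstarP t j a * (Wprod t (j+1) a)⁻¹) * (Wprod t (n-j) (a+j+1) * GdP t j a n) := by
            group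
        _ = EstarP t (j+1) a * GdP t (j+1) a n := rfl

omit hinv hcomm in
theorem Gd_peel (a n : ℕ) : ∀ k, k + 1 ≤ n →
    GdP t (k+1) a n = GdP t k (a+1) (n-1) * Wprod t n (a+1) := by
  intro k
  induction k generalizing a n with
  | zero =>
      intro hk
      show Wprod t (n - 0) (a+0+1) * 1 = 1 * Wprod t n (a+1)
      simp
  | succ k ih =>
      intro hk
      have h1 : GdP t (k+2) a n = Wprod t (n-(k+1)) (a+(k+1)+1) * GdP t (k+1) a n := rfl
      rw [h1, ih a n (by omega)]
      have h2 : GdP t (k+1) (a+1) (n-1) =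
          Wprod t ((n-1)-k) ((a+1)+k+1) * GdP t k (a+1) (n-1) := rfl
      rw [h2, show (n-1)-k = n-(k+1) by omega, show (a+1)+k+1 = a+(k+1)+1 by omega,
        mul_assoc]

omit hinv hcomm in
theorem Gd_evac (n a : ℕ) : GdP t n a n = EvacP t n (a+1) := by
  induction n generalizing a with
  | zero => rfl
  | succ n ih =>
      rw [Gd_peel t a (n+1) n (by omega), show n + 1 - 1 = n by omega, ih (a+1)]
      rfl

theorem Mlem (a n : ℕ) :
    (Wprod t (n+1) a) ^ n = EstarP t n a * EvacP t n (a+1) := by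
  rw [Plem t hinv hcomm a n n le_rfl, Gd_evac t n a]

theorem Slem (a n : ℕ) :
    (Wprod t (n+1) a) ^ (n+2) = EstarP t (n+1) a * EvacP t (n+1) a := by
  have hE : EvacP t (n+1) a = EvacP t n (a+1) * Wprod t (n+1) a := rfl
  have hS : EstarP t (n+1) a = EstarP t n a * (Wprod t (n+1) a)⁻¹ := rfl
  calc (Wprod t (n+1) a) ^ (n+2)
      = (Wprod t (n+1) a) ^ n * Wprod t (n+1) a * Wprod t (n+1) a := by
        rw [pow_succ, pow_succ]
    _ = EstarP t n a * EvacP t n (a+1) * Wprod t (n+1) a * Wprod t (n+1) a := by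
        rw [Mlem t hinv hcomm a n]
    _ = EstarP t n a * (EvacP t n (a+1) * Wprod t (n+1) a) * Wprod t (n+1) a := by
        group
    _ = EstarP t n a * ((Wprod t (n+1) a)⁻¹ * EvacP t n (a+1)) * Wprod t (n+1) a := by
        rw [L1' t hinv hcomm n a]
    _ = (EstarP t n a * (Wprod t (n+1) a)⁻¹) * (EvacP t n (a+1) * Wprod t (n+1) a) := by
        group
    _ = EstarP t (n+1) a * EvacP t (n+1) a := by rw [← hE, ← hS]

/-- Reversal: if `s i = t (r - i)` for `i ≤ r`, then `Wprod s` is an inverse `Wprod t`. -/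
theorem Wrev (r : ℕ) (s : ℕ → G) (hs : ∀ i ≤ r, s i = t (r - i)) :
    ∀ n a, a + n ≤ r + 1 → Wprod s n a = (Wprod t n (r+1-a-n))⁻¹ := by
  intro n
  induction n with
  | zero => intro a _; simp [Wprod]
  | succ n ih =>
      intro a ha
      have h1 : Wprod s (n+1) a = s a * Wprod s n (a+1) := rfl
      have h2 : Wprod t (n+1) (r+1-a-(n+1)) =
          Wprod t n (r-a-n) * t (r-a) := by
        rw [show r+1-a-(n+1) = r-a-n by omega]
        rw [Wprod_succ_right t n (r-a-n), show r-a-n+n = r-a by omega]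
      rw [h1, hs a (by omega), ih (a+1) (by omega), h2, mul_inv_rev, t_inv t hinv,
        show r - a = r - a by rfl, show r+1-(a+1)-n = r-a-n by omega]

theorem Evrev (r : ℕ) (s : ℕ → G) (hs : ∀ i ≤ r, s i = t (r - i)) :
    ∀ n a, a + n ≤ r + 1 → EvacP s n a = EstarP t n (r+1-a-n) := by
  intro n
  induction n with
  | zero => intro a _; rfl
  | succ n ih =>
      intro a ha
      have h1 : EvacP s (n+1) a = EvacP s n (a+1) * Wprod s (n+1) a := rfl
      rw [h1, ih (a+1) (by omega), Wrev t hinv hcomm r s hs (n+1) a ha,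
        show r+1-(a+1)-n = r+1-a-(n+1) by omega]
      rfl

end Abstract
set_option linter.unusedSectionVars false
set_option linter.unusedVariables false

section Concrete

variable {P : Type*} [PartialOrder P] [Fintype P]

theorem exists_cov_of_lt {p q : P} (h : p < q) : ∃ s, p ⋖ s ∧ s ≤ q := by
  obtain ⟨x, hx, hminx⟩ := Finset.exists_minimal
    (s := Finset.univ.filter fun x => p < x ∧ x ≤ q) ⟨q, by simp [h]⟩
  simp only [Finset.mem_filter, Finset.mem_univ, true_and] at hx hminx
  exact ⟨x, ⟨hx.1, fun c hpc hcx => lt_irrefl c (hcx.trans_le (hminx ⟨hpc, hcx.le.trans hx.2⟩ hcx.le))⟩, hx.2⟩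

theorem rk_lt_of_lt (rk : P → ℕ) (hcov : ∀ p q : P, p ⋖ q → rk q = rk p + 1) :
    ∀ (n : ℕ) {p q : P}, (Finset.univ.filter fun x => p < x).card ≤ n →
      p < q → rk p < rk q := by
  intro n
  induction n with
  | zero =>
      intro p q hcard h
      exfalso
      have : q ∈ Finset.univ.filter fun x => p < x := by simp [h]
      have := Finset.card_pos.mpr ⟨q, this⟩
      omega
  | succ n ih =>
      intro p q hcard h
      obtain ⟨s, hps, hsq⟩ := exists_cov_of_lt h
      have hrs : rk s = rk p + 1 := hcov p s hps
      rcases eq_or_lt_of_le hsq with rfl | hlt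
      · omega
      · have hsub : (Finset.univ.filter fun x => s < x) ⊂
            (Finset.univ.filter fun x => p < x) := by
          constructor
          · intro x hx
            simp only [Finset.mem_filter, Finset.mem_univ, true_and] at hx ⊢
            exact hps.lt.trans hx
          · intro hsup
            have : s ∈ Finset.univ.filter fun x => p < x := by simp [hps.lt]
            have h2 := hsup this
            simp only [Finset.mem_filter, Finset.mem_univ, true_and] at h2
            exact lt_irrefl s h2
        have hcard' : (Finset.univ.filter fun x => s < x).card ≤ n := by
          have := Finset.card_lt_card hsub
          omega
        have := ih hcard' hlt
        omega

theorem rk_lt (rk : P → ℕ) (hcov : ∀ p q : P, p ⋖ q → rk q = rk p + 1)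
    {p q : P} (h : p < q) : rk p < rk q :=
  rk_lt_of_lt rk hcov _ le_rfl h

theorem rk_le_top (rk : P → ℕ) (r : ℕ) (hcov : ∀ p q : P, p ⋖ q → rk q = rk p + 1)
    (hmax : ∀ p : P, IsMax p → rk p = r) (p : P) : rk p ≤ r := by
  obtain ⟨b, hle, hbmax⟩ := Finite.exists_le_maximal (p := fun _ : P => True) trivial
  have hb : IsMax b := fun c hc => hbmax.2 trivial hc
  rcases eq_or_lt_of_le hle with rfl | hlt
  · exact (hmax p hb).le
  · have := rk_lt rk hcov hlt
    rw [hmax b hb] at this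
    omega

theorem monotone_of_covs {g : P → ℕ} (hg : ∀ a b : P, a ⋖ b → g a ≤ g b) :
    Monotone g := by
  have aux : ∀ (n : ℕ) {p q : P}, (Finset.univ.filter fun x => p < x).card ≤ n →
      p < q → g p ≤ g q := by
    intro n
    induction n with
    | zero =>
        intro p q hcard h
        exfalso
        have : q ∈ Finset.univ.filter fun x => p < x := by simp [h]
        have := Finset.card_pos.mpr ⟨q, this⟩
        omega
    | succ n ih =>
        intro p q hcard h
        obtain ⟨s, hps, hsq⟩ := exists_cov_of_lt h
        rcases eq_or_lt_of_le hsq with rfl | hlt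
        · exact hg _ _ hps
        · have hsub : (Finset.univ.filter fun x => s < x) ⊂
              (Finset.univ.filter fun x => p < x) := by
            constructor
            · intro x hx
              simp only [Finset.mem_filter, Finset.mem_univ, true_and] at hx ⊢
              exact hps.lt.trans hx
            · intro hsup
              have : s ∈ Finset.univ.filter fun x => p < x := by simp [hps.lt]
              have h2 := hsup this
              simp only [Finset.mem_filter, Finset.mem_univ, true_and] at h2
              exact lt_irrefl s h2
          have hcard' : (Finset.univ.filter fun x => s < x).card ≤ n := by
            have := Finset.card_lt_card hsub
            omega
          exact (hg _ _ hps).trans (ih hcard' hlt)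
  intro p q hpq
  rcases eq_or_lt_of_le hpq with rfl | h
  · exact le_rfl
  · exact aux _ le_rfl h

-- basic min'/max' facts about the toggle
variable (m : ℕ)

theorem upMin_le_m (f : P → ℕ) (p : P) :
    (insert m ((Finset.univ.filter fun r => p ⋖ r).image f)).min'
      (Finset.insert_nonempty _ _) ≤ m :=
  Finset.min'_le _ _ (Finset.mem_insert_self _ _)

theorem upMin_le_cov (f : P → ℕ) {p q : P} (h : p ⋖ q) :
    (insert m ((Finset.univ.filter fun r => p ⋖ r).image f)).min'
      (Finset.insert_nonempty _ _) ≤ f q :=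
  Finset.min'_le _ _ (Finset.mem_insert_of_mem
    (Finset.mem_image_of_mem f (Finset.mem_filter.mpr ⟨Finset.mem_univ _, h⟩)))

theorem le_upMin {f : P → ℕ} (hf : IsPPart m f) (p : P) :
    f p ≤ (insert m ((Finset.univ.filter fun r => p ⋖ r).image f)).min'
      (Finset.insert_nonempty _ _) := by
  apply Finset.le_min'
  intro y hy
  rcases Finset.mem_insert.mp hy with rfl | hy
  · exact hf.1 p
  · obtain ⟨x, hx, rfl⟩ := Finset.mem_image.mp hy
    exact hf.2 (Finset.mem_filter.mp hx).2.le

theorem le_dnMax (f : P → ℕ) {p q : P} (h : q ⋖ p) :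
    f q ≤ (insert 0 ((Finset.univ.filter fun r => r ⋖ p).image f)).max'
      (Finset.insert_nonempty _ _) := by
  apply Finset.le_max'
  exact Finset.mem_insert_of_mem
    (Finset.mem_image_of_mem f (Finset.mem_filter.mpr ⟨Finset.mem_univ _, h⟩))

theorem dnMax_le {f : P → ℕ} (hf : IsPPart m f) (p : P) :
    (insert 0 ((Finset.univ.filter fun r => r ⋖ p).image f)).max'
      (Finset.insert_nonempty _ _) ≤ f p := by
  apply Finset.max'_le
  intro y hy
  rcases Finset.mem_insert.mp hy with rfl | hy
  · exact Nat.zero_le _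
  · obtain ⟨x, hx, rfl⟩ := Finset.mem_image.mp hy
    exact hf.2 (Finset.mem_filter.mp hx).2.le

theorem togVal_le_m {f : P → ℕ} (hf : IsPPart m f) (p : P) : togVal m f p ≤ m := by
  have h1 := upMin_le_m (P := P) m f p
  have h2 := dnMax_le m hf p
  unfold togVal
  omega

theorem togVal_le_cov {f : P → ℕ} (hf : IsPPart m f) {p q : P} (h : p ⋖ q) :
    togVal m f p ≤ f q := by
  have h1 := upMin_le_cov m f h
  have h2 := dnMax_le m hf p
  unfold togVal
  omega

theorem cov_le_togVal {f : P → ℕ} (hf : IsPPart m f) {p q : P} (h : q ⋖ p) :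
    f q ≤ togVal m f p := by
  have h1 := le_upMin m hf p
  have h2 := le_dnMax f h
  unfold togVal
  omega

theorem togVal_congr {f g : P → ℕ} (p : P) (h0 : f p = g p)
    (hup : ∀ q : P, p ⋖ q → f q = g q) (hdn : ∀ q : P, q ⋖ p → f q = g q) :
    togVal m f p = togVal m g p := by
  have h1 : (Finset.univ.filter fun r => p ⋖ r).image f =
      (Finset.univ.filter fun r => p ⋖ r).image g :=
    Finset.image_congr (fun x hx => hup x (Finset.mem_filter.mp hx).2)
  have h2 : (Finset.univ.filter fun r => r ⋖ p).image f =
      (Finset.univ.filter fun r => r ⋖ p).image g :=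
    Finset.image_congr (fun x hx => hdn x (Finset.mem_filter.mp hx).2)
  unfold togVal
  simp only [h1, h2, h0]

-- rank toggles
section RankTog

variable (rk : P → ℕ)

theorem rankTog_pos {q : P} {i : ℕ} (h : rk q = i) (f : P → ℕ) :
    rankTog rk m i f q = togVal m f q := if_pos h

theorem rankTog_neg {q : P} {i : ℕ} (h : ¬ rk q = i) (f : P → ℕ) :
    rankTog rk m i f q = f q := if_neg h

variable (hcov : ∀ p q : P, p ⋖ q → rk q = rk p + 1)

include hcov

theorem rankTog_isPPart {f : P → ℕ} (hf : IsPPart m f) (i : ℕ) :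
    IsPPart m (rankTog rk m i f) := by
  constructor
  · intro p
    by_cases h : rk p = i
    · rw [rankTog_pos m rk h]
      exact togVal_le_m m hf p
    · rw [rankTog_neg m rk h]
      exact hf.1 p
  · apply monotone_of_covs
    intro a b hab
    have hrk : rk b = rk a + 1 := hcov a b hab
    by_cases ha : rk a = i
    · rw [rankTog_pos m rk ha, rankTog_neg m rk (by omega)]
      exact togVal_le_cov m hf hab
    · rw [rankTog_neg m rk ha]
      by_cases hb : rk b = i
      · rw [rankTog_pos m rk hb]
        exact cov_le_togVal m hf hab
      · rw [rankTog_neg m rk hb]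
        exact hf.2 hab.le

theorem rankTog_invol {f : P → ℕ} (hf : IsPPart m f) (i : ℕ) :
    rankTog rk m i (rankTog rk m i f) = f := by
  funext q
  by_cases hq : rk q = i
  · rw [rankTog_pos m rk hq]
    have h1 : (Finset.univ.filter fun r => q ⋖ r).image (rankTog rk m i f) =
        (Finset.univ.filter fun r => q ⋖ r).image f := by
      apply Finset.image_congr
      intro x hx
      have := hcov q x (Finset.mem_filter.mp hx).2
      exact rankTog_neg m rk (by omega) f
    have h2 : (Finset.univ.filter fun r => r ⋖ q).image (rankTog rk m i f) =
        (Finset.univ.filter fun r => r ⋖ q).image f := by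
      apply Finset.image_congr
      intro x hx
      have := hcov x q (Finset.mem_filter.mp hx).2
      exact rankTog_neg m rk (by omega) f
    have h4 := le_upMin m hf q
    have h5 := dnMax_le m hf q
    unfold togVal
    simp only [h1, h2, rankTog_pos m rk hq]
    unfold togVal
    omega
  · rw [rankTog_neg m rk hq, rankTog_neg m rk hq]

theorem rankTog_comm (i j : ℕ) (hij : i + 2 ≤ j) (f : P → ℕ) :
    rankTog rk m i (rankTog rk m j f) = rankTog rk m j (rankTog rk m i f) := by
  funext q
  have key : ∀ k l : ℕ, (k + 2 ≤ l ∨ l + 2 ≤ k) → rk q = k →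
      rankTog rk m k (rankTog rk m l f) q = togVal m f q := by
    intro k l hkl hqk
    rw [rankTog_pos m rk hqk]
    apply togVal_congr
    · exact rankTog_neg m rk (by omega) f
    · intro x hx
      have := hcov q x hx
      exact rankTog_neg m rk (by omega) f
    · intro x hx
      have := hcov x q hx
      exact rankTog_neg m rk (by omega) f
  by_cases hqi : rk q = i
  · rw [key i j (Or.inl hij) hqi, rankTog_neg m rk (by omega), rankTog_pos m rk hqi]
  · by_cases hqj : rk q = j
    · rw [rankTog_neg m rk (by omega), rankTog_pos m rk hqj, key j i (Or.inr hij) hqj]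
    · rw [rankTog_neg m rk hqi, rankTog_neg m rk hqj, rankTog_neg m rk hqj,
        rankTog_neg m rk hqi]

end RankTog

-- complements and duality
section Duality

theorem min'_complement (s : Finset P) (g : P → ℕ) (hg : ∀ x ∈ s, g x ≤ m) :
    (insert m (s.image fun x => m - g x)).min' (Finset.insert_nonempty _ _) =
      m - (insert 0 (s.image g)).max' (Finset.insert_nonempty _ _) := by
  apply le_antisymm
  · have hmem := Finset.max'_mem (insert 0 (s.image g)) (Finset.insert_nonempty _ _)
    rcases Finset.mem_insert.mp hmem with h0 | hI
    · rw [h0, Nat.sub_zero]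
      exact Finset.min'_le _ _ (Finset.mem_insert_self _ _)
    · obtain ⟨x, hx, hxe⟩ := Finset.mem_image.mp hI
      rw [← hxe]
      apply Finset.min'_le
      exact Finset.mem_insert_of_mem (Finset.mem_image_of_mem _ hx)
  · apply Finset.le_min'
    intro y hy
    rcases Finset.mem_insert.mp hy with rfl | hI
    · omega
    · obtain ⟨x, hx, rfl⟩ := Finset.mem_image.mp hI
      have : g x ≤ (insert 0 (s.image g)).max' (Finset.insert_nonempty _ _) :=
        Finset.le_max' _ _ (Finset.mem_insert_of_mem (Finset.mem_image_of_mem _ hx))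
      omega

theorem max'_complement (s : Finset P) (g : P → ℕ) (hg : ∀ x ∈ s, g x ≤ m) :
    (insert 0 (s.image fun x => m - g x)).max' (Finset.insert_nonempty _ _) =
      m - (insert m (s.image g)).min' (Finset.insert_nonempty _ _) := by
  apply le_antisymm
  · apply Finset.max'_le
    intro y hy
    rcases Finset.mem_insert.mp hy with rfl | hI
    · omega
    · obtain ⟨x, hx, rfl⟩ := Finset.mem_image.mp hI
      have : (insert m (s.image g)).min' (Finset.insert_nonempty _ _) ≤ g x :=
        Finset.min'_le _ _ (Finset.mem_insert_of_mem (Finset.mem_image_of_mem _ hx))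
      omega
  · have hmem := Finset.min'_mem (insert m (s.image g)) (Finset.insert_nonempty _ _)
    rcases Finset.mem_insert.mp hmem with h0 | hI
    · rw [h0, Nat.sub_self]
      exact Nat.zero_le _
    · obtain ⟨x, hx, hxe⟩ := Finset.mem_image.mp hI
      rw [← hxe]
      apply Finset.le_max'
      exact Finset.mem_insert_of_mem (Finset.mem_image_of_mem _ hx)

theorem filter_dual_up (q : Pᵒᵈ) (g : Pᵒᵈ → ℕ) :
    ((Finset.univ.filter fun rr : Pᵒᵈ => q ⋖ rr).image g) =
      ((Finset.univ.filter fun s : P => s ⋖ OrderDual.ofDual q).image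
        (fun s : P => g (OrderDual.toDual s))) := by
  ext y
  simp only [Finset.mem_image, Finset.mem_filter, Finset.mem_univ, true_and]
  constructor
  · rintro ⟨x, hx, rfl⟩
    exact ⟨OrderDual.ofDual x, hx.ofDual, rfl⟩
  · rintro ⟨x, hx, rfl⟩
    exact ⟨OrderDual.toDual x, hx.toDual, rfl⟩

theorem filter_dual_dn (q : Pᵒᵈ) (g : Pᵒᵈ → ℕ) :
    ((Finset.univ.filter fun rr : Pᵒᵈ => rr ⋖ q).image g) =
      ((Finset.univ.filter fun s : P => OrderDual.ofDual q ⋖ s).image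
        (fun s : P => g (OrderDual.toDual s))) := by
  ext y
  simp only [Finset.mem_image, Finset.mem_filter, Finset.mem_univ, true_and]
  constructor
  · rintro ⟨x, hx, rfl⟩
    exact ⟨OrderDual.ofDual x, hx.ofDual, rfl⟩
  · rintro ⟨x, hx, rfl⟩
    exact ⟨OrderDual.toDual x, hx.toDual, rfl⟩

theorem isPPart_dual {f : P → ℕ} (hf : IsPPart m f) :
    IsPPart (P := Pᵒᵈ) m (fun x => m - f (OrderDual.ofDual x)) := by
  constructor
  · intro p
    show m - f (OrderDual.ofDual p) ≤ m
    omega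
  · intro x y hxy
    show m - f (OrderDual.ofDual x) ≤ m - f (OrderDual.ofDual y)
    have h1 : f (OrderDual.ofDual y) ≤ f (OrderDual.ofDual x) :=
      hf.2 (show OrderDual.ofDual y ≤ OrderDual.ofDual x from hxy)
    omega

theorem togVal_dual {f : P → ℕ} (hf : IsPPart m f) (q : Pᵒᵈ) :
    togVal (P := Pᵒᵈ) m (fun x => m - f (OrderDual.ofDual x)) q =
      m - togVal m f (OrderDual.ofDual q) := by
  have hup : ((Finset.univ.filter fun rr : Pᵒᵈ => q ⋖ rr).image
      (fun x : Pᵒᵈ => m - f (OrderDual.ofDual x))) =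
      ((Finset.univ.filter fun s : P => s ⋖ OrderDual.ofDual q).image
        (fun s : P => m - f s)) := filter_dual_up q _
  have hdn : ((Finset.univ.filter fun rr : Pᵒᵈ => rr ⋖ q).image
      (fun x : Pᵒᵈ => m - f (OrderDual.ofDual x))) =
      ((Finset.univ.filter fun s : P => OrderDual.ofDual q ⋖ s).image
        (fun s : P => m - f s)) := filter_dual_dn q _
  have hA := min'_complement m (Finset.univ.filter fun s : P => s ⋖ OrderDual.ofDual q)
    f (fun x _ => hf.1 x)
  have hB := max'_complement m (Finset.univ.filter fun s : P => OrderDual.ofDual q ⋖ s)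
    f (fun x _ => hf.1 x)
  have h1 := le_upMin m hf (OrderDual.ofDual q)
  have h2 := dnMax_le m hf (OrderDual.ofDual q)
  have h3 := upMin_le_m (P := P) m f (OrderDual.ofDual q)
  unfold togVal
  simp only [hup, hdn, hA, hB]
  omega

end Duality

end Concrete

section Perm

variable {P : Type*} [PartialOrder P] [Fintype P]
variable (rk : P → ℕ) (m : ℕ)

noncomputable def TpPerm (hcov : ∀ p q : P, p ⋖ q → rk q = rk p + 1) (i : ℕ) :
    Equiv.Perm {f : P → ℕ // IsPPart m f} where
  toFun f := ⟨rankTog rk m i f.1, rankTog_isPPart m rk hcov f.2 i⟩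
  invFun f := ⟨rankTog rk m i f.1, rankTog_isPPart m rk hcov f.2 i⟩
  left_inv f := Subtype.ext (rankTog_invol m rk hcov f.2 i)
  right_inv f := Subtype.ext (rankTog_invol m rk hcov f.2 i)

variable (hcov : ∀ p q : P, p ⋖ q → rk q = rk p + 1)

theorem TpPerm_inv (i : ℕ) : TpPerm rk m hcov i * TpPerm rk m hcov i = 1 := by
  apply Equiv.ext
  intro f
  rw [Equiv.Perm.mul_apply, Equiv.Perm.one_apply]
  exact Subtype.ext (rankTog_invol m rk hcov f.2 i)

theorem TpPerm_comm (i j : ℕ) (hij : i + 2 ≤ j) :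
    TpPerm rk m hcov i * TpPerm rk m hcov j = TpPerm rk m hcov j * TpPerm rk m hcov i := by
  apply Equiv.ext
  intro f
  rw [Equiv.Perm.mul_apply, Equiv.Perm.mul_apply]
  exact Subtype.ext (rankTog_comm m rk hcov i j hij f.1)

theorem W_bridge (r : ℕ) : ∀ j, j ≤ r → ∀ f : {f : P → ℕ // IsPPart m f},
    ((Wprod (TpPerm rk m hcov) (j+1) (r-j)) f).1 = rowFrom rk m r j f.1 := by
  intro j
  induction j with
  | zero =>
      intro _ f
      have h1 : (Wprod (TpPerm rk m hcov) 1 (r-0)) f = TpPerm rk m hcov (r-0) f := by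
        show ((TpPerm rk m hcov (r-0)) * (1 : Equiv.Perm {f : P → ℕ // IsPPart m f})) f = _
        rw [mul_one]
      rw [h1, Nat.sub_zero]
      rfl
  | succ j ih =>
      intro hj f
      have e1 : r - (j+1) + 1 = r - j := by omega
      have h1 : (Wprod (TpPerm rk m hcov) (j+2) (r-(j+1))) f =
          TpPerm rk m hcov (r-(j+1))
            ((Wprod (TpPerm rk m hcov) (j+1) (r-(j+1)+1)) f) := by
        show ((TpPerm rk m hcov (r-(j+1))) * Wprod (TpPerm rk m hcov) (j+1) (r-(j+1)+1)) f = _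
        rw [Equiv.Perm.mul_apply]
      rw [h1]
      show rankTog rk m (r-(j+1))
        (((Wprod (TpPerm rk m hcov) (j+1) (r-(j+1)+1)) f)).1 = rowFrom rk m r (j+1) f.1
      rw [e1, ih (by omega) f]
      rfl

theorem rowm_bridge (r : ℕ) (f : {f : P → ℕ // IsPPart m f}) :
    ((Wprod (TpPerm rk m hcov) (r+1) 0) f).1 = rowm rk m r f.1 := by
  have := W_bridge rk m hcov r r le_rfl f
  rw [Nat.sub_self] at this
  exact this

theorem Evac_bridge (r : ℕ) : ∀ j, j ≤ r → ∀ f : {f : P → ℕ // IsPPart m f},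
    ((EvacP (TpPerm rk m hcov) (j+1) (r-j)) f).1 = rvacAux rk m r j f.1 := by
  intro j
  induction j with
  | zero =>
      intro _ f
      have h1 : (EvacP (TpPerm rk m hcov) 1 (r-0)) f =
          (Wprod (TpPerm rk m hcov) 1 (r-0)) f := by
        show ((1 : Equiv.Perm {f : P → ℕ // IsPPart m f}) * Wprod (TpPerm rk m hcov) 1 (r-0)) f = _
        rw [one_mul]
      rw [h1, W_bridge rk m hcov r 0 (Nat.zero_le _) f]
      rfl
  | succ j ih =>
      intro hj f
      have e1 : r - (j+1) + 1 = r - j := by omega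
      have h1 : (EvacP (TpPerm rk m hcov) (j+2) (r-(j+1))) f =
          (EvacP (TpPerm rk m hcov) (j+1) (r-(j+1)+1))
            ((Wprod (TpPerm rk m hcov) (j+2) (r-(j+1))) f) := by
        show ((EvacP (TpPerm rk m hcov) (j+1) (r-(j+1)+1)) *
          Wprod (TpPerm rk m hcov) (j+2) (r-(j+1))) f = _
        rw [Equiv.Perm.mul_apply]
      rw [h1, e1]
      rw [ih (by omega) ((Wprod (TpPerm rk m hcov) (j+2) (r-(j+1))) f)]
      rw [W_bridge rk m hcov r (j+1) hj f]
      rfl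

theorem rvac_bridge (r : ℕ) (f : {f : P → ℕ // IsPPart m f}) :
    ((EvacP (TpPerm rk m hcov) (r+1) 0) f).1 = rvac rk m r f.1 := by
  have := Evac_bridge rk m hcov r r le_rfl f
  rw [Nat.sub_self] at this
  exact this

theorem pow_bridge (r : ℕ) : ∀ (k : ℕ) (f : {f : P → ℕ // IsPPart m f}),
    (((Wprod (TpPerm rk m hcov) (r+1) 0) ^ k) f).1 = (rowm rk m r)^[k] f.1 := by
  intro k
  induction k with
  | zero => intro f; rw [pow_zero, Function.iterate_zero]; rfl
  | succ k ih =>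
      intro f
      rw [pow_succ, Equiv.Perm.mul_apply, Function.iterate_succ_apply]
      rw [ih ((Wprod (TpPerm rk m hcov) (r+1) 0) f), rowm_bridge rk m hcov r f]

end Perm

section ConjSec

noncomputable def permConj {α β : Type*} (e : α ≃ β) : Equiv.Perm α →* Equiv.Perm β where
  toFun g := (e.symm.trans g).trans e
  map_one' := by
    apply Equiv.ext; intro x
    simp
  map_mul' g h := by
    apply Equiv.ext; intro x
    simp [Equiv.Perm.mul_apply]

theorem permConj_apply {α β : Type*} (e : α ≃ β) (g : Equiv.Perm α) (x : β) :
    permConj e g x = e (g (e.symm x)) := rfl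

theorem map_Wprod {G H : Type*} [Group G] [Group H] (φ : G →* H) (t : ℕ → G) :
    ∀ n a, φ (Wprod t n a) = Wprod (fun i => φ (t i)) n a := by
  intro n
  induction n with
  | zero => intro a; simp [Wprod]
  | succ n ih =>
      intro a
      show φ (t a * Wprod t n (a+1)) = φ (t a) * Wprod (fun i => φ (t i)) n (a+1)
      rw [map_mul, ih (a+1)]

theorem map_EstarP {G H : Type*} [Group G] [Group H] (φ : G →* H) (t : ℕ → G) :
    ∀ n a, φ (EstarP t n a) = EstarP (fun i => φ (t i)) n a := by
  intro n
  induction n with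
  | zero => intro a; simp [EstarP]
  | succ n ih =>
      intro a
      show φ (EstarP t n a * (Wprod t (n+1) a)⁻¹) =
        EstarP (fun i => φ (t i)) n a * (Wprod (fun i => φ (t i)) (n+1) a)⁻¹
      rw [map_mul, ih a, map_inv, map_Wprod]

noncomputable def compE {P : Type*} [PartialOrder P] [Fintype P] (m : ℕ) :
    {f : P → ℕ // IsPPart m f} ≃ {g : Pᵒᵈ → ℕ // IsPPart m g} where
  toFun f := ⟨fun q => m - f.1 (OrderDual.ofDual q), isPPart_dual m f.2⟩
  invFun g := ⟨fun p => m - g.1 (OrderDual.toDual p), by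
    constructor
    · intro p
      show m - g.1 (OrderDual.toDual p) ≤ m
      omega
    · intro x y hxy
      show m - g.1 (OrderDual.toDual x) ≤ m - g.1 (OrderDual.toDual y)
      have h1 : g.1 (OrderDual.toDual y) ≤ g.1 (OrderDual.toDual x) :=
        g.2.2 (show OrderDual.toDual y ≤ OrderDual.toDual x from hxy)
      omega⟩
  left_inv f := Subtype.ext (funext fun p => Nat.sub_sub_self (f.2.1 p))
  right_inv g := Subtype.ext (funext fun q => Nat.sub_sub_self (g.2.1 q))

end ConjSec

/-- For any finite graded poset `P` (with rank function `rk`, covers increasing rank by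
one, minimal elements of rank `0`, and maximal elements of rank `r`): rowvacuation is an
involution on `P`-partitions of height `m`; `Rvac ∘ Row = Row⁻¹ ∘ Rvac` (equivalently,
`Row ∘ Rvac ∘ Row = Rvac`); and `Row^{r+2} = Rvac* ∘ Rvac`. -/
theorem rvac_basics {P : Type*} [PartialOrder P] [Fintype P]
    (rk : P → ℕ) (r m : ℕ)
    (hcov : ∀ p q : P, p ⋖ q → rk q = rk p + 1)
    (hmin : ∀ p : P, IsMin p → rk p = 0)
    (hmax : ∀ p : P, IsMax p → rk p = r) :
    (∀ f, IsPPart m f → rvac rk m r (rvac rk m r f) = f) ∧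
    (∀ f, IsPPart m f →
      rowm rk m r (rvac rk m r (rowm rk m r f)) = rvac rk m r f) ∧
    (∀ f, IsPPart m f →
      (rowm rk m r)^[r + 2] f = rvacStar rk m r (rvac rk m r f)) := by
  classical
  have hinvT : ∀ i, TpPerm rk m hcov i * TpPerm rk m hcov i = 1 := TpPerm_inv rk m hcov
  have hcommT : ∀ i j, i + 2 ≤ j →
      TpPerm rk m hcov i * TpPerm rk m hcov j = TpPerm rk m hcov j * TpPerm rk m hcov i :=
    TpPerm_comm rk m hcov
  -- dual data
  have dhcov : ∀ p q : Pᵒᵈ, p ⋖ q →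
      (fun q : Pᵒᵈ => r - rk (OrderDual.ofDual q)) q =
        (fun q : Pᵒᵈ => r - rk (OrderDual.ofDual q)) p + 1 := by
    intro p q h
    have h' := hcov _ _ h.ofDual
    have hle := rk_le_top rk r hcov hmax (OrderDual.ofDual p)
    show r - rk (OrderDual.ofDual q) = (r - rk (OrderDual.ofDual p)) + 1
    omega
  -- the key conjugation of generators
  have conj_key : ∀ i, i ≤ r → ∀ f : {f : P → ℕ // IsPPart m f},
      TpPerm (fun q : Pᵒᵈ => r - rk (OrderDual.ofDual q)) m dhcov i ((compE m) f) =
        (compE m) (TpPerm rk m hcov (r - i) f) := by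
    intro i hi f
    apply Subtype.ext
    funext q
    have hle := rk_le_top rk r hcov hmax (OrderDual.ofDual q)
    show rankTog (fun q : Pᵒᵈ => r - rk (OrderDual.ofDual q)) m i
        (fun x => m - f.1 (OrderDual.ofDual x)) q =
      m - rankTog rk m (r - i) f.1 (OrderDual.ofDual q)
    by_cases h : r - rk (OrderDual.ofDual q) = i
    · rw [rankTog_pos (P := Pᵒᵈ) m (fun q : Pᵒᵈ => r - rk (OrderDual.ofDual q)) h,
        rankTog_pos m rk (show rk (OrderDual.ofDual q) = r - i by omega),
        togVal_dual m f.2 q]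
    · rw [rankTog_neg (P := Pᵒᵈ) m (fun q : Pᵒᵈ => r - rk (OrderDual.ofDual q)) h,
        rankTog_neg m rk (show ¬ rk (OrderDual.ofDual q) = r - i by omega)]
  have conj_key' : ∀ i, i ≤ r →
      TpPerm (fun q : Pᵒᵈ => r - rk (OrderDual.ofDual q)) m dhcov i =
        permConj (compE m) (TpPerm rk m hcov (r - i)) := by
    intro i hi
    apply Equiv.ext
    intro x
    rw [permConj_apply]
    have := conj_key i hi ((compE m).symm x)
    rw [Equiv.apply_symm_apply] at this
    rw [this]
  have hinvT' : ∀ i, permConj (compE m) (TpPerm rk m hcov i) *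
      permConj (compE m) (TpPerm rk m hcov i) = 1 := by
    intro i
    rw [← map_mul, hinvT i, map_one]
  have hcommT' : ∀ i j, i + 2 ≤ j →
      permConj (compE m) (TpPerm rk m hcov i) * permConj (compE m) (TpPerm rk m hcov j) =
        permConj (compE m) (TpPerm rk m hcov j) * permConj (compE m) (TpPerm rk m hcov i) := by
    intro i j hij
    rw [← map_mul, ← map_mul, hcommT i j hij]
  have dualEvac : EvacP (TpPerm (fun q : Pᵒᵈ => r - rk (OrderDual.ofDual q)) m dhcov) (r+1) 0 =
      permConj (compE m) (EstarP (TpPerm rk m hcov) (r+1) 0) := by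
    have := Evrev (fun j => permConj (compE m) (TpPerm rk m hcov j)) hinvT' hcommT' r
      (TpPerm (fun q : Pᵒᵈ => r - rk (OrderDual.ofDual q)) m dhcov)
      (fun i hi => conj_key' i hi) (r+1) 0 (by omega)
    rw [show r + 1 - 0 - (r+1) = 0 by omega] at this
    rw [this, map_EstarP]
  refine ⟨?_, ?_, ?_⟩
  · intro f hf
    have h1 := rvac_bridge rk m hcov r ⟨f, hf⟩
    have h2 := rvac_bridge rk m hcov r ((EvacP (TpPerm rk m hcov) (r+1) 0) ⟨f, hf⟩)
    rw [h1] at h2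
    rw [← h2, ← Equiv.Perm.mul_apply, L3 (TpPerm rk m hcov) hinvT hcommT (r+1) 0,
      Equiv.Perm.one_apply]
  · intro f hf
    have h1 := rowm_bridge rk m hcov r ⟨f, hf⟩
    have h2 := rvac_bridge rk m hcov r ((Wprod (TpPerm rk m hcov) (r+1) 0) ⟨f, hf⟩)
    rw [h1] at h2
    have h3 := rowm_bridge rk m hcov r
      ((EvacP (TpPerm rk m hcov) (r+1) 0) ((Wprod (TpPerm rk m hcov) (r+1) 0) ⟨f, hf⟩))
    rw [h2] at h3
    rw [← h3]
    have h4 := rvac_bridge rk m hcov r ⟨f, hf⟩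
    rw [← h4]
    have h5 : (Wprod (TpPerm rk m hcov) (r+1) 0)
        ((EvacP (TpPerm rk m hcov) (r+1) 0) ((Wprod (TpPerm rk m hcov) (r+1) 0) ⟨f, hf⟩)) =
        (EvacP (TpPerm rk m hcov) (r+1) 0) ⟨f, hf⟩ := by
      rw [← Equiv.Perm.mul_apply, ← Equiv.Perm.mul_apply,
        L2 (TpPerm rk m hcov) hinvT hcommT r 0]
    rw [h5]
  · intro f hf
    have hpow := pow_bridge rk m hcov r (r+2) ⟨f, hf⟩
    rw [← hpow]
    have h1 := rvac_bridge rk m hcov r ⟨f, hf⟩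
    rw [← h1]
    -- now compute rvacStar applied to the P-partition F2.1
    have key : ∀ g : {f : P → ℕ // IsPPart m f},
        rvacStar rk m r g.1 = (EstarP (TpPerm rk m hcov) (r+1) 0 g).1 := by
      intro g
      have hd := rvac_bridge (P := Pᵒᵈ) (fun q : Pᵒᵈ => r - rk (OrderDual.ofDual q)) m
        dhcov r ((compE m) g)
      rw [dualEvac] at hd
      rw [permConj_apply, Equiv.symm_apply_apply] at hd
      funext p
      show m - rvac (P := Pᵒᵈ) (fun q : Pᵒᵈ => r - rk (OrderDual.ofDual q)) m r
        (fun q => m - g.1 (OrderDual.ofDual q)) (OrderDual.toDual p) =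
        (EstarP (TpPerm rk m hcov) (r+1) 0 g).1 p
      have hc : ((compE m) g).1 = fun q : Pᵒᵈ => m - g.1 (OrderDual.ofDual q) := rfl
      rw [← hc, ← hd]
      show m - (m - (EstarP (TpPerm rk m hcov) (r+1) 0 g).1 p) = _
      exact Nat.sub_sub_self ((EstarP (TpPerm rk m hcov) (r+1) 0 g).2.1 p)
    rw [key ((EvacP (TpPerm rk m hcov) (r+1) 0) ⟨f, hf⟩)]
    rw [← Equiv.Perm.mul_apply, ← Slem (TpPerm rk m hcov) hinvT hcommT 0 r]
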